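/- arXiv:2202.08642 — 2 statements merged into one kernel-verified Lean document; each statement's English description precedes it below -/
import Mathlib

section
/- Let n ≥ m ≥ 2 and let V₁, V₂ be (m−1)-dimensional subspaces of an n-dimensional inner product space whose intersection W has dimension at least m−2. Then the projective distance between V₁ and V₂ (defined via the lines ⋀^{m−1}V₁ and ⋀^{m−1}V₂ in ⋀^{m−1}U) equals the maximum over nonzero x ∈ V₁ of dist(x, V₂). -/
/-- The Gram determinant `det (⟪x i, y j⟫)` of two `m`-tuples of vectors.
For pure wedge products `X = x₁ ∧ ⋯ ∧ xₘ` and `Y = y₁ ∧ ⋯ ∧ yₘ` this is the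
inner product `⟪X, Y⟫` in `⋀ᵐ U`, for the inner product on `⋀ᵐ U` making
wedge products of orthonormal vectors orthonormal. -/
noncomputable def gramDet (𝕜 : Type*) [RCLike 𝕜] {E : Type*} [NormedAddCommGroup E]
    [InnerProductSpace 𝕜 E] {m : ℕ} (x y : Fin m → E) : 𝕜 :=
  Matrix.det (Matrix.of fun i j => (inner 𝕜 (x i) (y j) : 𝕜))

/-- The norm `‖x₁ ∧ ⋯ ∧ xₘ‖` of a pure wedge product, computed as the square
root of the Gram determinant. -/
noncomputable def wedgeNorm (𝕜 : Type*) [RCLike 𝕜] {E : Type*} [NormedAddCommGroup E]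
    [InnerProductSpace 𝕜 E] {m : ℕ} (x : Fin m → E) : ℝ :=
  Real.sqrt (RCLike.re (gramDet 𝕜 x x))

/-- The projective distance `dist(x,y) = ‖x ∧ y‖ / (‖x‖ ‖y‖)` between two
nonzero vectors. -/
noncomputable def pdist (𝕜 : Type*) [RCLike 𝕜] {E : Type*} [NormedAddCommGroup E]
    [InnerProductSpace 𝕜 E] (x y : E) : ℝ :=
  wedgeNorm 𝕜 ![x, y] / (‖x‖ * ‖y‖)

/-- The projective distance between the lines spanned by the pure wedge products
`x₁ ∧ ⋯ ∧ xₘ` and `y₁ ∧ ⋯ ∧ yₘ` in `⋀ᵐ U`: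
`dist(X,Y) = ‖X ∧ Y‖/(‖X‖‖Y‖) = √(‖X‖²‖Y‖² − |⟪X,Y⟫|²)/(‖X‖‖Y‖)`.
When `x`, `y` are bases of `m`-dimensional subspaces `V₁`, `V₂`, this is the
projective distance `dist(V₁,V₂)` (it does not depend on the chosen bases). -/
noncomputable def pdistT (𝕜 : Type*) [RCLike 𝕜] {E : Type*} [NormedAddCommGroup E]
    [InnerProductSpace 𝕜 E] {m : ℕ} (x y : Fin m → E) : ℝ :=
  Real.sqrt (RCLike.re (gramDet 𝕜 x x) * RCLike.re (gramDet 𝕜 y y)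
      - ‖gramDet 𝕜 x y‖ ^ 2) / (wedgeNorm 𝕜 x * wedgeNorm 𝕜 y)

/-- The distance `dist(x, V)` from a nonzero point to a subspace: the infimum
(in fact minimum) of `dist(x,y)` over nonzero `y ∈ V`. -/
noncomputable def pdistPV (𝕜 : Type*) [RCLike 𝕜] {E : Type*} [NormedAddCommGroup E]
    [InnerProductSpace 𝕜 E] (x : E) (V : Submodule 𝕜 E) : ℝ :=
  sInf {d : ℝ | ∃ y ∈ V, y ≠ 0 ∧ d = pdist 𝕜 x y}

section StmtHelpers

open Matrix

variable {𝕜 : Type*} [RCLike 𝕜] {E : Type*} [NormedAddCommGroup E] [InnerProductSpace 𝕜 E]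

local notation "⟪" x ", " y "⟫" => @inner 𝕜 _ _ x y

lemma gramDet_smul_left {m : ℕ} (A : Matrix (Fin m) (Fin m) 𝕜) (x y : Fin m → E) :
    gramDet 𝕜 (fun i => ∑ l, A i l • x l) y = star A.det * gramDet 𝕜 x y := by
  unfold gramDet
  have h : (Matrix.of fun i j => ⟪∑ l, A i l • x l, y j⟫)
      = (A.map star) * (Matrix.of fun i j => ⟪x i, y j⟫) := by
    ext i j
    simp [Matrix.mul_apply, sum_inner, inner_smul_left]
  rw [h, Matrix.det_mul]
  congr 1
  have : A.map star = (Aᵀ)ᴴ := by ext i j; simp [Matrix.conjTranspose_apply]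
  rw [this, Matrix.det_conjTranspose, Matrix.det_transpose]

lemma gramDet_smul_right {m : ℕ} (B : Matrix (Fin m) (Fin m) 𝕜) (x y : Fin m → E) :
    gramDet 𝕜 x (fun j => ∑ l, B j l • y l) = B.det * gramDet 𝕜 x y := by
  unfold gramDet
  have h : (Matrix.of fun i j => ⟪x i, ∑ l, B j l • y l⟫)
      = (Matrix.of fun i j => ⟪x i, y j⟫) * Bᵀ := by
    ext i j
    simp [Matrix.mul_apply, inner_sum, inner_smul_right, mul_comm]
  rw [h, Matrix.det_mul, Matrix.det_transpose, mul_comm]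

lemma re_gram_self_smul {m : ℕ} (A : Matrix (Fin m) (Fin m) 𝕜) (x : Fin m → E) :
    RCLike.re (gramDet 𝕜 (fun i => ∑ l, A i l • x l) (fun i => ∑ l, A i l • x l))
      = ‖A.det‖ ^ 2 * RCLike.re (gramDet 𝕜 x x) := by
  rw [gramDet_smul_left, gramDet_smul_right, ← mul_assoc, mul_comm (star A.det) A.det,
    RCLike.star_def, RCLike.mul_conj]
  rw [← RCLike.ofReal_pow, RCLike.re_ofReal_mul]

lemma wedgeNorm_smul {m : ℕ} (A : Matrix (Fin m) (Fin m) 𝕜) (x : Fin m → E) :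
    wedgeNorm 𝕜 (fun i => ∑ l, A i l • x l) = ‖A.det‖ * wedgeNorm 𝕜 x := by
  rw [wedgeNorm, re_gram_self_smul, Real.sqrt_mul (sq_nonneg _), Real.sqrt_sq (norm_nonneg _)]
  rfl

lemma pdistT_smul {m : ℕ} (A B : Matrix (Fin m) (Fin m) 𝕜) (x y : Fin m → E)
    (hA : A.det ≠ 0) (hB : B.det ≠ 0) :
    pdistT 𝕜 (fun i => ∑ l, A i l • x l) (fun j => ∑ l, B j l • y l) = pdistT 𝕜 x y := by
  have hgxy : gramDet 𝕜 (fun i => ∑ l, A i l • x l) (fun j => ∑ l, B j l • y l)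
      = star A.det * B.det * gramDet 𝕜 x y := by
    rw [gramDet_smul_left, gramDet_smul_right]; ring
  unfold pdistT
  rw [re_gram_self_smul, re_gram_self_smul, wedgeNorm_smul, wedgeNorm_smul, hgxy]
  have hn : ‖star A.det * B.det * gramDet 𝕜 x y‖ ^ 2
      = (‖A.det‖ ^2 * ‖B.det‖^2) * ‖gramDet 𝕜 x y‖ ^ 2 := by
    simp [norm_mul, mul_pow]
  rw [hn]
  have key : ‖A.det‖ ^ 2 * RCLike.re (gramDet 𝕜 x x) * (‖B.det‖ ^ 2 * RCLike.re (gramDet 𝕜 y y))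
      - ‖A.det‖ ^ 2 * ‖B.det‖ ^ 2 * ‖gramDet 𝕜 x y‖ ^ 2
      = (‖A.det‖ * ‖B.det‖)^2 * (RCLike.re (gramDet 𝕜 x x) * RCLike.re (gramDet 𝕜 y y)
          - ‖gramDet 𝕜 x y‖ ^ 2) := by ring
  rw [key, Real.sqrt_mul (sq_nonneg _), Real.sqrt_sq (mul_nonneg (norm_nonneg _) (norm_nonneg _))]
  have hAB : (0:ℝ) < ‖A.det‖ * ‖B.det‖ := mul_pos (norm_pos_iff.mpr hA) (norm_pos_iff.mpr hB)
  rw [show ‖A.det‖ * wedgeNorm 𝕜 x * (‖B.det‖ * wedgeNorm 𝕜 y)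
      = ‖A.det‖ * ‖B.det‖ * (wedgeNorm 𝕜 x * wedgeNorm 𝕜 y) by ring]
  rw [mul_div_mul_left _ _ hAB.ne']

lemma pdist_eq (x y : E) :
    pdist 𝕜 x y = Real.sqrt (‖x‖^2 * ‖y‖^2 - ‖⟪x, y⟫‖^2) / (‖x‖ * ‖y‖) := by
  unfold pdist wedgeNorm gramDet
  congr 2
  rw [Matrix.det_fin_two]
  simp only [Matrix.of_apply, Matrix.cons_val', Matrix.cons_val_zero, Matrix.cons_val_one,
    Matrix.head_cons, Matrix.empty_val', Matrix.cons_val_fin_one, Matrix.head_fin_const]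
  rw [← inner_conj_symm y x, RCLike.mul_conj]
  simp [inner_self_eq_norm_sq_to_K, RCLike.ofReal_pow]

lemma pdist_nonneg (x y : E) : 0 ≤ pdist 𝕜 x y := by
  unfold pdist wedgeNorm
  positivity




lemma exists_basechange {m : ℕ} (b b' : Fin m → E) (hb : LinearIndependent 𝕜 b)
    (h : Submodule.span 𝕜 (Set.range b) ≤ Submodule.span 𝕜 (Set.range b')) :
    ∃ A : Matrix (Fin m) (Fin m) 𝕜, (∀ i, b i = ∑ l, A i l • b' l) ∧ A.det ≠ 0 := by
  have hmem : ∀ i, b i ∈ Submodule.span 𝕜 (Set.range b') := fun i =>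
    h (Submodule.subset_span ⟨i, rfl⟩)
  choose c hc using fun i => (Submodule.mem_span_range_iff_exists_fun 𝕜).mp (hmem i)
  refine ⟨Matrix.of c, fun i => (hc i).symm, ?_⟩
  intro hdet
  obtain ⟨v, hv0, hvA⟩ := (Matrix.exists_vecMul_eq_zero_iff).mpr hdet
  have hcoef : ∀ l, ∑ i, v i * c i l = 0 := fun l => by
    have := congrFun hvA l
    simpa [Matrix.vecMul, dotProduct] using this
  have hzero : ∑ i, v i • b i = 0 := by
    calc ∑ i, v i • b i = ∑ i, ∑ l, (v i * c i l) • b' l := by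
          refine Finset.sum_congr rfl fun i _ => ?_
          rw [← hc i, Finset.smul_sum]
          simp [smul_smul]
      _ = ∑ l, (∑ i, v i * c i l) • b' l := by
          rw [Finset.sum_comm]
          simp [Finset.sum_smul]
      _ = 0 := by simp [hcoef]
  exact hv0 (funext fun i => (Fintype.linearIndependent_iff.mp hb _ hzero) i)




lemma inner_sum_sum {m : ℕ} (v v' : Fin m → E) (dg : Fin m → 𝕜)
    (hg : ∀ i j, ⟪v i, v' j⟫ = if i = j then dg i else 0) (c d : Fin m → 𝕜) :
    ⟪∑ i, c i • v i, ∑ j, d j • v' j⟫ = ∑ i, starRingEnd 𝕜 (c i) * d i * dg i := by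
  rw [sum_inner]
  simp_rw [inner_smul_left, inner_sum, inner_smul_right, hg, mul_ite, mul_zero,
    Finset.sum_ite_eq, Finset.mem_univ, if_true, mul_assoc]

variable {k : ℕ} {w : Fin k → E} {u₁ u₂ : E}

lemma gram_snoc (hw : Orthonormal 𝕜 w) (hu₁ : ‖u₁‖ = 1) (hu₂ : ‖u₂‖ = 1)
    (hw1 : ∀ j, ⟪w j, u₁⟫ = 0) (hw2 : ∀ j, ⟪w j, u₂⟫ = 0) (i j : Fin (k+1)) :
    ⟪(Fin.snoc w u₁ : Fin (k+1) → E) i, (Fin.snoc w u₂ : Fin (k+1) → E) j⟫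
      = if i = j then (Fin.snoc (fun _ => (1:𝕜)) ⟪u₁, u₂⟫ : Fin (k+1) → 𝕜) i else 0 := by
  induction i using Fin.lastCases with
  | last =>
    induction j using Fin.lastCases with
    | last => simp
    | cast j' =>
      have h0 : ⟪u₁, w j'⟫ = 0 := by
        rw [← inner_conj_symm, hw1 j', map_zero]
      simp [h0, (Fin.castSucc_lt_last j').ne']
  | cast i' =>
    induction j using Fin.lastCases with
    | last => simp [hw2 i', (Fin.castSucc_lt_last i').ne]
    | cast j' =>
      have := orthonormal_iff_ite.mp hw i' j'
      simp only [Fin.snoc_castSucc, this, Fin.castSucc_inj]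

lemma orthonormal_snoc (hw : Orthonormal 𝕜 w) (hu₁ : ‖u₁‖ = 1)
    (hw1 : ∀ j, ⟪w j, u₁⟫ = 0) : Orthonormal 𝕜 (Fin.snoc w u₁) := by
  rw [orthonormal_iff_ite]
  intro i j
  have := gram_snoc (u₂ := u₁) hw hu₁ hu₁ hw1 hw1 i j
  rw [this]
  induction i using Fin.lastCases with
  | last =>
    simp only [Fin.snoc_last]
    split
    · rw [inner_self_eq_norm_sq_to_K, hu₁]; norm_num
    · rfl
  | cast i' => simp


lemma pdist_le_one (x y : E) : pdist 𝕜 x y ≤ 1 := by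
  rw [pdist_eq]
  rcases eq_or_lt_of_le (mul_nonneg (norm_nonneg x) (norm_nonneg y)) with h | h
  · rw [← h, div_zero]; norm_num
  · rw [div_le_one h]
    calc Real.sqrt (‖x‖^2 * ‖y‖^2 - ‖⟪x, y⟫‖^2) ≤ Real.sqrt (‖x‖^2 * ‖y‖^2) := by
          apply Real.sqrt_le_sqrt; nlinarith [sq_nonneg ‖⟪x, y⟫‖]
      _ = ‖x‖ * ‖y‖ := by
          rw [show ‖x‖^2 * ‖y‖^2 = (‖x‖ * ‖y‖)^2 by ring, Real.sqrt_sq h.le]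

variable {k : ℕ} {w : Fin k → E} {u₁ u₂ : E}

lemma gramDet_snoc (hw : Orthonormal 𝕜 w) (hu₁ : ‖u₁‖ = 1) (hu₂ : ‖u₂‖ = 1)
    (hw1 : ∀ j, ⟪w j, u₁⟫ = 0) (hw2 : ∀ j, ⟪w j, u₂⟫ = 0) :
    gramDet 𝕜 (Fin.snoc w u₁) (Fin.snoc w u₂) = ⟪u₁, u₂⟫ := by
  unfold gramDet
  have h : (Matrix.of fun i j => ⟪(Fin.snoc w u₁ : Fin (k+1) → E) i,
        (Fin.snoc w u₂ : Fin (k+1) → E) j⟫)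
      = Matrix.diagonal (Fin.snoc (fun _ => (1:𝕜)) ⟪u₁, u₂⟫) := by
    ext i j
    rw [Matrix.of_apply, gram_snoc hw hu₁ hu₂ hw1 hw2, Matrix.diagonal_apply]
  rw [h, Matrix.det_diagonal, Fin.prod_snoc]
  simp

lemma gramDet_snoc_self (hw : Orthonormal 𝕜 w) (hu₁ : ‖u₁‖ = 1)
    (hw1 : ∀ j, ⟪w j, u₁⟫ = 0) :
    gramDet 𝕜 (Fin.snoc w u₁) (Fin.snoc w u₁) = 1 := by
  rw [gramDet_snoc hw hu₁ hu₁ hw1 hw1, inner_self_eq_norm_sq_to_K, hu₁]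
  norm_num

lemma wedgeNorm_snoc (hw : Orthonormal 𝕜 w) (hu₁ : ‖u₁‖ = 1)
    (hw1 : ∀ j, ⟪w j, u₁⟫ = 0) :
    wedgeNorm 𝕜 (Fin.snoc w u₁) = 1 := by
  rw [wedgeNorm, gramDet_snoc_self hw hu₁ hw1]
  simp

lemma pdistT_snoc (hw : Orthonormal 𝕜 w) (hu₁ : ‖u₁‖ = 1) (hu₂ : ‖u₂‖ = 1)
    (hw1 : ∀ j, ⟪w j, u₁⟫ = 0) (hw2 : ∀ j, ⟪w j, u₂⟫ = 0) :
    pdistT 𝕜 (Fin.snoc w u₁) (Fin.snoc w u₂) = Real.sqrt (1 - ‖⟪u₁, u₂⟫‖^2) := by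
  rw [pdistT, gramDet_snoc_self hw hu₁ hw1, gramDet_snoc_self hw hu₂ hw2,
    gramDet_snoc hw hu₁ hu₂ hw1 hw2, wedgeNorm_snoc hw hu₁ hw1, wedgeNorm_snoc hw hu₂ hw2]
  simp

lemma inner_single_sum {m : ℕ} (v v' : Fin m → E) (dg : Fin m → 𝕜)
    (hg : ∀ i j, ⟪v i, v' j⟫ = if i = j then dg i else 0) (d : Fin m → 𝕜) (i₀ : Fin m) :
    ⟪v i₀, ∑ j, d j • v' j⟫ = d i₀ * dg i₀ := by
  rw [inner_sum]
  simp_rw [inner_smul_right, hg i₀, mul_ite, mul_zero]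
  simp

variable {k : ℕ} {w : Fin k → E} {u₁ u₂ : E}

lemma pdist_u1_eq (hu₁ : ‖u₁‖ = 1) (hu₂ : ‖u₂‖ = 1) :
    pdist 𝕜 u₁ u₂ = Real.sqrt (1 - ‖⟪u₁, u₂⟫‖^2) := by
  rw [pdist_eq, hu₁, hu₂]
  norm_num

lemma pdist_u1_ge (hw : Orthonormal 𝕜 w) (hu₁ : ‖u₁‖ = 1) (hu₂ : ‖u₂‖ = 1)
    (hw1 : ∀ j, ⟪w j, u₁⟫ = 0) (hw2 : ∀ j, ⟪w j, u₂⟫ = 0) (y : E)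
    (hy : y ∈ Submodule.span 𝕜 (Set.range (Fin.snoc w u₂ : Fin (k+1) → E))) (hy0 : y ≠ 0) :
    Real.sqrt (1 - ‖⟪u₁, u₂⟫‖^2) ≤ pdist 𝕜 u₁ y := by
  obtain ⟨c, hc⟩ := (Submodule.mem_span_range_iff_exists_fun 𝕜).mp hy
  have hgle : ‖⟪u₁, u₂⟫‖ ≤ 1 := by
    have := norm_inner_le_norm (𝕜 := 𝕜) u₁ u₂
    rwa [hu₁, hu₂, one_mul] at this
  have hg2 : ‖⟪u₁, u₂⟫‖^2 ≤ 1 := by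
    nlinarith [mul_nonneg (sub_nonneg.mpr hgle) (norm_nonneg (inner (𝕜 := 𝕜) u₁ u₂))]
  have h1 : ⟪u₁, y⟫ = c (Fin.last k) * ⟪u₁, u₂⟫ := by
    rw [← hc]
    have := inner_single_sum (Fin.snoc w u₁) (Fin.snoc w u₂) _
      (gram_snoc hw hu₁ hu₂ hw1 hw2) c (Fin.last k)
    simpa using this
  have h2 : ⟪u₂, y⟫ = c (Fin.last k) * ⟪u₂, u₂⟫ := by
    rw [← hc]
    have := inner_single_sum (Fin.snoc w u₂) (Fin.snoc w u₂) _
      (gram_snoc hw hu₂ hu₂ hw2 hw2) c (Fin.last k)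
    simpa using this
  have hu22 : ⟪u₂, u₂⟫ = (1:𝕜) := by
    rw [inner_self_eq_norm_sq_to_K, hu₂]; norm_num
  have hcl : ‖c (Fin.last k)‖ ≤ ‖y‖ := by
    have h3 := norm_inner_le_norm (𝕜 := 𝕜) u₂ y
    rw [h2, hu22, mul_one, hu₂, one_mul] at h3
    exact h3
  have hy' : (0:ℝ) < ‖y‖ := norm_pos_iff.mpr hy0
  rw [pdist_eq, h1, hu₁, one_mul]
  rw [le_div_iff₀ hy']
  have hrw : Real.sqrt (1 - ‖⟪u₁, u₂⟫‖^2) * ‖y‖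
      = Real.sqrt ((1 - ‖⟪u₁, u₂⟫‖^2) * ‖y‖^2) := by
    rw [Real.sqrt_mul (by linarith) (‖y‖^2), Real.sqrt_sq hy'.le]
  rw [hrw, one_pow, one_mul]
  apply Real.sqrt_le_sqrt
  rw [norm_mul]
  have hc2 : ‖c (Fin.last k)‖^2 ≤ ‖y‖^2 := by nlinarith [norm_nonneg (c (Fin.last k))]
  nlinarith [sq_nonneg ‖⟪u₁, u₂⟫‖]

lemma pdistPV_bddBelow (x : E) (V : Submodule 𝕜 E) :
    BddBelow {d : ℝ | ∃ y ∈ V, y ≠ 0 ∧ d = pdist 𝕜 x y} := by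
  refine ⟨0, ?_⟩
  rintro d ⟨y, _, _, rfl⟩
  exact pdist_nonneg x y

lemma pdistPV_u1 (hw : Orthonormal 𝕜 w) (hu₁ : ‖u₁‖ = 1) (hu₂ : ‖u₂‖ = 1)
    (hw1 : ∀ j, ⟪w j, u₁⟫ = 0) (hw2 : ∀ j, ⟪w j, u₂⟫ = 0) :
    pdistPV 𝕜 u₁ (Submodule.span 𝕜 (Set.range (Fin.snoc w u₂ : Fin (k+1) → E)))
      = Real.sqrt (1 - ‖⟪u₁, u₂⟫‖^2) := by
  have hu₂0 : u₂ ≠ 0 := by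
    intro h; rw [h, norm_zero] at hu₂; norm_num at hu₂
  have hmem : u₂ ∈ Submodule.span 𝕜 (Set.range (Fin.snoc w u₂ : Fin (k+1) → E)) :=
    Submodule.subset_span ⟨Fin.last k, Fin.snoc_last _ _⟩
  rw [pdistPV]
  apply le_antisymm
  · exact csInf_le (pdistPV_bddBelow u₁ _) ⟨u₂, hmem, hu₂0, (pdist_u1_eq hu₁ hu₂).symm⟩
  · refine le_csInf ⟨_, u₂, hmem, hu₂0, rfl⟩ ?_
    rintro d ⟨y, hy, hy0, rfl⟩
    exact pdist_u1_ge hw hu₁ hu₂ hw1 hw2 y hy hy0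

lemma pdist_self (x : E) : pdist 𝕜 x x = 0 := by
  rw [pdist_eq, inner_self_eq_norm_sq_to_K]
  rw [norm_pow, RCLike.norm_ofReal, abs_norm]
  rw [show ‖x‖^2 * ‖x‖^2 - (‖x‖^2)^2 = 0 by ring]
  simp

lemma exists_good (hw : Orthonormal 𝕜 w) (hu₁ : ‖u₁‖ = 1) (hu₂ : ‖u₂‖ = 1)
    (hw1 : ∀ j, ⟪w j, u₁⟫ = 0) (hw2 : ∀ j, ⟪w j, u₂⟫ = 0) (x : E)
    (hx : x ∈ Submodule.span 𝕜 (Set.range (Fin.snoc w u₁ : Fin (k+1) → E))) (hx0 : x ≠ 0) :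
    ∃ y ∈ Submodule.span 𝕜 (Set.range (Fin.snoc w u₂ : Fin (k+1) → E)),
      y ≠ 0 ∧ pdist 𝕜 x y ≤ Real.sqrt (1 - ‖⟪u₁, u₂⟫‖^2) := by
  obtain ⟨c, hc⟩ := (Submodule.mem_span_range_iff_exists_fun 𝕜).mp hx
  have hgle : ‖⟪u₁, u₂⟫‖ ≤ 1 := by
    have := norm_inner_le_norm (𝕜 := 𝕜) u₁ u₂
    rwa [hu₁, hu₂, one_mul] at this
  have hg2 : ‖⟪u₁, u₂⟫‖^2 ≤ 1 := by
    nlinarith [mul_nonneg (sub_nonneg.mpr hgle) (norm_nonneg (inner (𝕜 := 𝕜) u₁ u₂))]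
  have hu₂0 : u₂ ≠ 0 := by
    intro h; rw [h, norm_zero] at hu₂; norm_num at hu₂
  by_cases ha : c (Fin.last k) = 0
  · refine ⟨x, ?_, hx0, ?_⟩
    · rw [← hc, Fin.sum_univ_castSucc]
      apply Submodule.add_mem
      · apply Submodule.sum_mem
        intro j _
        apply Submodule.smul_mem
        apply Submodule.subset_span
        exact ⟨Fin.castSucc j, by simp⟩
      · rw [ha, zero_smul]; exact Submodule.zero_mem _
    · rw [pdist_self]; exact Real.sqrt_nonneg _
  · by_cases hgz : ⟪u₁, u₂⟫ = 0
    · refine ⟨u₂, Submodule.subset_span ⟨Fin.last k, Fin.snoc_last _ _⟩, hu₂0, ?_⟩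
      rw [hgz]
      simpa using pdist_le_one x u₂
    · -- main case
      set g := (⟪u₁, u₂⟫ : 𝕜) with hgdef
      set a := c (Fin.last k) with hadef
      set d : Fin (k+1) → 𝕜 := Fin.snoc (fun j => c (Fin.castSucc j)) (a * star g) with hddef
      set y := ∑ i, d i • (Fin.snoc w u₂ : Fin (k+1) → E) i with hydef
      set s := ∑ j : Fin k, ‖c (Fin.castSucc j)‖^2 with hsdef
      have hs0 : 0 ≤ s := Finset.sum_nonneg fun j _ => sq_nonneg _
      set t := s + ‖a‖^2 * ‖g‖^2 with htdef
      set r := s + ‖a‖^2 with hrdef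
      have ht0 : 0 < t := by
        have : 0 < ‖a‖^2 * ‖g‖^2 :=
          mul_pos (pow_pos (norm_pos_iff.mpr ha) 2) (pow_pos (norm_pos_iff.mpr hgz) 2)
        linarith
      have hr0 : 0 < r := by
        have : 0 < ‖a‖^2 := pow_pos (norm_pos_iff.mpr ha) 2
        linarith
      have hgram12 := gram_snoc hw hu₁ hu₂ hw1 hw2
      have on₁ := orthonormal_snoc hw hu₁ hw1
      have on₂ := orthonormal_snoc hw hu₂ hw2
      have hgram11 : ∀ i j, ⟪(Fin.snoc w u₁ : Fin (k+1) → E) i,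
          (Fin.snoc w u₁ : Fin (k+1) → E) j⟫ = if i = j then (fun _ => (1:𝕜)) i else 0 :=
        fun i j => orthonormal_iff_ite.mp on₁ i j
      have hgram22 : ∀ i j, ⟪(Fin.snoc w u₂ : Fin (k+1) → E) i,
          (Fin.snoc w u₂ : Fin (k+1) → E) j⟫ = if i = j then (fun _ => (1:𝕜)) i else 0 :=
        fun i j => orthonormal_iff_ite.mp on₂ i j
      have hlast : (starRingEnd 𝕜) a * (a * star g) * g = ((‖a‖^2 * ‖g‖^2 : ℝ) : 𝕜) := by
        rw [RCLike.star_def,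
          show (starRingEnd 𝕜) a * (a * (starRingEnd 𝕜) g) * g
            = ((starRingEnd 𝕜) a * a) * ((starRingEnd 𝕜) g * g) by ring,
          RCLike.conj_mul, RCLike.conj_mul]
        push_cast
        ring
      have hxy : ⟪x, y⟫ = ((t : ℝ) : 𝕜) := by
        rw [← hc, hydef, inner_sum_sum _ _ _ hgram12 c d]
        rw [Fin.sum_univ_castSucc]
        simp only [hddef, Fin.snoc_castSucc, Fin.snoc_last, mul_one]
        rw [hlast, htdef, hsdef]
        simp only [RCLike.conj_mul]
        push_cast
        ring
      have hxx : ⟪x, x⟫ = ((r : ℝ) : 𝕜) := by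
        rw [← hc, inner_sum_sum _ _ _ hgram11 c c]
        simp only [mul_one, RCLike.conj_mul]
        rw [hrdef, hsdef, Fin.sum_univ_castSucc]
        push_cast
        ring
      have hyy : ⟪y, y⟫ = ((t : ℝ) : 𝕜) := by
        rw [hydef, inner_sum_sum _ _ _ hgram22 d d]
        simp only [mul_one, RCLike.conj_mul]
        rw [htdef, hsdef, Fin.sum_univ_castSucc]
        simp only [hddef, Fin.snoc_castSucc, Fin.snoc_last, norm_mul, norm_star]
        push_cast
        ring
      have hnx : ‖x‖^2 = r := by
        have h := @inner_self_eq_norm_sq 𝕜 _ _ _ _ x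
        rw [hxx, RCLike.ofReal_re] at h
        exact h.symm
      have hny : ‖y‖^2 = t := by
        have h := @inner_self_eq_norm_sq 𝕜 _ _ _ _ y
        rw [hyy, RCLike.ofReal_re] at h
        exact h.symm
      have hy0 : y ≠ 0 := by
        intro h
        rw [h, norm_zero] at hny
        simp only [ne_eq, OfNat.ofNat_ne_zero, not_false_eq_true, zero_pow] at hny
        linarith
      refine ⟨y, (Submodule.mem_span_range_iff_exists_fun 𝕜).mpr ⟨d, hydef.symm⟩, hy0, ?_⟩
      rw [pdist_eq, hxy]
      have hxn : ‖x‖ = Real.sqrt r := by rw [← hnx, Real.sqrt_sq (norm_nonneg _)]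
      have hyn : ‖y‖ = Real.sqrt t := by rw [← hny, Real.sqrt_sq (norm_nonneg _)]
      rw [hnx, hny, hxn, hyn, RCLike.norm_ofReal, abs_of_pos ht0]
      rw [div_le_iff₀ (mul_pos (Real.sqrt_pos.mpr hr0) (Real.sqrt_pos.mpr ht0))]
      have hrhs : Real.sqrt (1 - ‖g‖^2) * (Real.sqrt r * Real.sqrt t)
          = Real.sqrt ((1 - ‖g‖^2) * (r * t)) := by
        rw [Real.sqrt_mul (by linarith) (r*t), Real.sqrt_mul hr0.le t]
      rw [hrhs]
      apply Real.sqrt_le_sqrt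
      have hkey : ‖g‖^2 * r ≤ t := by
        rw [hrdef, htdef]
        nlinarith [mul_nonneg hs0 (sub_nonneg.mpr hg2)]
      nlinarith [mul_le_mul_of_nonneg_right hkey ht0.le]

lemma core_isGreatest (hw : Orthonormal 𝕜 w) (hu₁ : ‖u₁‖ = 1) (hu₂ : ‖u₂‖ = 1)
    (hw1 : ∀ j, ⟪w j, u₁⟫ = 0) (hw2 : ∀ j, ⟪w j, u₂⟫ = 0) :
    IsGreatest {d : ℝ | ∃ x ∈ Submodule.span 𝕜 (Set.range (Fin.snoc w u₁ : Fin (k+1) → E)),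
        x ≠ 0 ∧ d = pdistPV 𝕜 x (Submodule.span 𝕜 (Set.range (Fin.snoc w u₂ : Fin (k+1) → E)))}
      (Real.sqrt (1 - ‖⟪u₁, u₂⟫‖^2)) := by
  constructor
  · refine ⟨u₁, Submodule.subset_span ⟨Fin.last k, Fin.snoc_last _ _⟩, ?_, ?_⟩
    · intro h; rw [h, norm_zero] at hu₁; norm_num at hu₁
    · exact (pdistPV_u1 hw hu₁ hu₂ hw1 hw2).symm
  · rintro d ⟨x, hx, hx0, rfl⟩
    obtain ⟨y, hy, hy0, hle⟩ := exists_good hw hu₁ hu₂ hw1 hw2 x hx hx0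
    rw [pdistPV]
    exact le_trans (csInf_le (pdistPV_bddBelow x _) ⟨y, hy, hy0, rfl⟩) hle

lemma exists_orthonormal_in (W : Submodule 𝕜 E) [FiniteDimensional 𝕜 E] {k : ℕ}
    (h : k ≤ Module.finrank 𝕜 W) :
    ∃ w : Fin k → E, Orthonormal 𝕜 w ∧ ∀ j, w j ∈ W := by
  let onb := stdOrthonormalBasis 𝕜 W
  refine ⟨fun j => (onb (Fin.castLE h j) : E), ?_, fun j => (onb (Fin.castLE h j)).2⟩
  rw [orthonormal_iff_ite]
  intro i j
  rw [← Submodule.coe_inner, orthonormal_iff_ite.mp onb.orthonormal]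
  congr 1
  simp [Fin.castLE_inj]

lemma exists_extend (V : Submodule 𝕜 E) [FiniteDimensional 𝕜 E]
    (hV : Module.finrank 𝕜 V = k + 1)
    (hw : Orthonormal 𝕜 w) (hwV : ∀ j, w j ∈ V) :
    ∃ u : E, ‖u‖ = 1 ∧ (∀ j, ⟪w j, u⟫ = 0) ∧
      Submodule.span 𝕜 (Set.range (Fin.snoc w u : Fin (k+1) → E)) = V := by
  set w' : Fin k → V := fun j => ⟨w j, hwV j⟩ with hw'def
  have hw' : Orthonormal 𝕜 w' := by
    rw [orthonormal_iff_ite]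
    intro i j
    rw [← orthonormal_iff_ite.mp hw i j, Submodule.coe_inner]
  set W' : Submodule 𝕜 V := Submodule.span 𝕜 (Set.range w') with hW'def
  have hrk : Module.finrank 𝕜 W' = k := by
    rw [hW'def, finrank_span_eq_card hw'.linearIndependent, Fintype.card_fin]
  have hrkperp : Module.finrank 𝕜 W'ᗮ = 1 := by
    have := Submodule.finrank_add_finrank_orthogonal (K := W')
    rw [hrk, hV] at this
    omega
  have hne : W'ᗮ ≠ ⊥ := by
    intro h
    rw [h, finrank_bot] at hrkperp
    omega
  obtain ⟨v, hv, hv0⟩ := Submodule.ne_bot_iff _ |>.mp hne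
  have hvE0 : (v : E) ≠ 0 := fun h => hv0 (Subtype.coe_injective (by simpa using h))
  have hvn : ‖(v : E)‖ ≠ 0 := norm_ne_zero_iff.mpr hvE0
  have hnormsmul : ‖((‖(v : E)‖⁻¹ : ℝ) : 𝕜) • (v : E)‖ = 1 := by
    rw [norm_smul, RCLike.norm_ofReal, abs_inv, abs_norm, inv_mul_cancel₀ hvn]
  refine ⟨((‖(v : E)‖⁻¹ : ℝ) : 𝕜) • (v : E), hnormsmul, ?_, ?_⟩
  · intro j
    rw [inner_smul_right]
    have : ⟪w j, (v : E)⟫ = 0 := by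
      have := (Submodule.mem_orthogonal W' v).mp hv (w' j)
        (Submodule.subset_span ⟨j, rfl⟩)
      rw [Submodule.coe_inner] at this
      exact this
    rw [this, mul_zero]
  · set u := ((‖(v : E)‖⁻¹ : ℝ) : 𝕜) • (v : E) with hudef
    have hu1 : ‖u‖ = 1 := hnormsmul
    have hwu : ∀ j, ⟪w j, u⟫ = 0 := by
      intro j
      rw [hudef, inner_smul_right]
      have := (Submodule.mem_orthogonal W' v).mp hv (w' j) (Submodule.subset_span ⟨j, rfl⟩)
      rw [Submodule.coe_inner] at this
      rw [this, mul_zero]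
    have hon := orthonormal_snoc hw hu1 hwu
    have hle : Submodule.span 𝕜 (Set.range (Fin.snoc w u : Fin (k+1) → E)) ≤ V := by
      rw [Submodule.span_le]
      rintro _ ⟨i, rfl⟩
      induction i using Fin.lastCases with
      | last =>
        rw [Fin.snoc_last]
        exact Submodule.smul_mem _ _ v.2
      | cast i' =>
        rw [Fin.snoc_castSucc]
        exact hwV i'
    apply Submodule.eq_of_le_of_finrank_le hle
    rw [hV, finrank_span_eq_card hon.linearIndependent, Fintype.card_fin]

theorem stmt5' {k : ℕ}
    [FiniteDimensional 𝕜 E]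
    (hn : k + 2 ≤ Module.finrank 𝕜 E)
    (V₁ V₂ : Submodule 𝕜 E)
    (h₁ : Module.finrank 𝕜 V₁ = k + 1) (h₂ : Module.finrank 𝕜 V₂ = k + 1)
    (hW : k ≤ Module.finrank 𝕜 (V₁ ⊓ V₂ : Submodule 𝕜 E))
    (b₁ b₂ : Fin (k + 1) → E)
    (hb₁ : LinearIndependent 𝕜 b₁) (hb₁s : Submodule.span 𝕜 (Set.range b₁) = V₁)
    (hb₂ : LinearIndependent 𝕜 b₂) (hb₂s : Submodule.span 𝕜 (Set.range b₂) = V₂) :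
    IsGreatest {d : ℝ | ∃ x ∈ V₁, x ≠ 0 ∧ d = pdistPV 𝕜 x V₂} (pdistT 𝕜 b₁ b₂) := by
  obtain ⟨w, hw, hwm⟩ := exists_orthonormal_in (V₁ ⊓ V₂) hW
  have hwm1 : ∀ j, w j ∈ V₁ := fun j => (Submodule.mem_inf.mp (hwm j)).1
  have hwm2 : ∀ j, w j ∈ V₂ := fun j => (Submodule.mem_inf.mp (hwm j)).2
  obtain ⟨u₁, hu₁, hw1, hsp₁⟩ := exists_extend V₁ h₁ hw hwm1
  obtain ⟨u₂, hu₂, hw2, hsp₂⟩ := exists_extend V₂ h₂ hw hwm2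
  have hpdT : pdistT 𝕜 b₁ b₂ = Real.sqrt (1 - ‖⟪u₁, u₂⟫‖^2) := by
    obtain ⟨A, hA, hAdet⟩ := exists_basechange b₁ (Fin.snoc w u₁) hb₁
      (le_of_eq (hb₁s.trans hsp₁.symm))
    obtain ⟨B, hB, hBdet⟩ := exists_basechange b₂ (Fin.snoc w u₂) hb₂
      (le_of_eq (hb₂s.trans hsp₂.symm))
    have e₁ : b₁ = fun i => ∑ l, A i l • (Fin.snoc w u₁ : Fin (k+1) → E) l := funext hA
    have e₂ : b₂ = fun i => ∑ l, B i l • (Fin.snoc w u₂ : Fin (k+1) → E) l := funext hB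
    rw [e₁, e₂, pdistT_smul A B _ _ hAdet hBdet, pdistT_snoc hw hu₁ hu₂ hw1 hw2]
  rw [hpdT, ← hsp₁, ← hsp₂]
  exact core_isGreatest hw hu₁ hu₂ hw1 hw2

end StmtHelpers

/-- for `(m−1)`-dimensional subspaces `V₁, V₂` of an
`n`-dimensional inner product space (here `m = k+2`, so `dim Vᵢ = k+1` and
`n ≥ k+2`) whose intersection has dimension at least `m−2 = k`, the projective
distance `dist(V₁,V₂)` — computed via bases `b₁`, `b₂` of `V₁`, `V₂` as the
distance between the lines `⋀^{m−1}V₁` and `⋀^{m−1}V₂` — is the maximum of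
`dist(x, V₂)` over nonzero `x ∈ V₁`. -/
theorem stmt5 {𝕜 : Type*} [RCLike 𝕜] {E : Type*} [NormedAddCommGroup E]
    [InnerProductSpace 𝕜 E] [FiniteDimensional 𝕜 E] {k : ℕ}
    (hn : k + 2 ≤ Module.finrank 𝕜 E)
    (V₁ V₂ : Submodule 𝕜 E)
    (h₁ : Module.finrank 𝕜 V₁ = k + 1) (h₂ : Module.finrank 𝕜 V₂ = k + 1)
    (hW : k ≤ Module.finrank 𝕜 (V₁ ⊓ V₂ : Submodule 𝕜 E))
    (b₁ b₂ : Fin (k + 1) → E)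
    (hb₁ : LinearIndependent 𝕜 b₁) (hb₁s : Submodule.span 𝕜 (Set.range b₁) = V₁)
    (hb₂ : LinearIndependent 𝕜 b₂) (hb₂s : Submodule.span 𝕜 (Set.range b₂) = V₂) :
    IsGreatest {d : ℝ | ∃ x ∈ V₁, x ≠ 0 ∧ d = pdistPV 𝕜 x V₂} (pdistT 𝕜 b₁ b₂) :=
  stmt5' hn V₁ V₂ h₁ h₂ hW b₁ b₂ hb₁ hb₁s hb₂ hb₂s
end

section
/- Let k, ℓ, m be integers with 1 ≤ k < ℓ ≤ m ≤ n and let y₁,...,yₘ be linearly independent vectors of Lⁿ (L = ℝ or ℂ) such that both sequences obtained by omitting y_ℓ and by omitting y_k are almost orthogonal. Then the subspaces V₁ = span(y₁,...,ŷ_ℓ,...,yₘ) and V₂ = span(y₁,...,ŷ_k,...,yₘ) satisfy dist(V₁,V₂) ≤ e⁴ · ‖y₁ ∧ ⋯ ∧ yₘ‖/(‖y₁‖⋯‖yₘ‖). -/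
/-- The span of the vectors `x i` with `i < j`. -/
noncomputable def earlierSpan {𝕜 : Type*} [RCLike 𝕜] {E : Type*} [NormedAddCommGroup E]
    [InnerProductSpace 𝕜 E] {m : ℕ} (x : Fin m → E) (j : Fin m) : Submodule 𝕜 E :=
  Submodule.span 𝕜 {v : E | ∃ i : Fin m, i < j ∧ v = x i}

/-- A sequence `(x₁,…,xₘ)` is almost orthogonal if it is linearly independent
and `dist(xⱼ, ⟨x₁,…,x_{j−1}⟩) ≥ 1 − 1/2^{j−1}` for `2 ≤ j ≤ m`.
(Here the index `j : Fin m` is `0`-based, so the condition reads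
`1 − (1/2)^j ≤ dist(x j, span (x i, i < j))` for `j ≥ 1`.) -/
def AlmostOrthogonal (𝕜 : Type*) [RCLike 𝕜] {E : Type*} [NormedAddCommGroup E]
    [InnerProductSpace 𝕜 E] {m : ℕ} (x : Fin m → E) : Prop :=
  LinearIndependent 𝕜 x ∧
    ∀ j : Fin m, 0 < (j : ℕ) →
      1 - (1 / 2 : ℝ) ^ (j : ℕ) ≤ pdistPV 𝕜 (x j) (earlierSpan x j)

section Helpers

variable {𝕜 : Type*} [RCLike 𝕜] {E : Type*} [NormedAddCommGroup E] [InnerProductSpace 𝕜 E]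

local notation "⟪" x ", " y "⟫" => @inner 𝕜 _ _ x y

lemma gramDet_conj {m : ℕ} (x y : Fin m → E) :
    starRingEnd 𝕜 (gramDet 𝕜 y x) = gramDet 𝕜 x y := by
  rw [gramDet, gramDet, RingHom.map_det, ← Matrix.det_transpose]
  congr 1
  ext i j
  simp [Matrix.transpose_apply, inner_conj_symm]

lemma gramDet_comp_perm {m : ℕ} (x y : Fin m → E) (σ τ : Equiv.Perm (Fin m)) :
    gramDet 𝕜 (x ∘ σ) (y ∘ τ)
      = ((Equiv.Perm.sign σ : ℤ) : 𝕜) * ((Equiv.Perm.sign τ : ℤ) : 𝕜) * gramDet 𝕜 x y := by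
  have h : (Matrix.of fun i j => (⟪(x ∘ σ) i, (y ∘ τ) j⟫ : 𝕜))
      = ((Matrix.of fun i j => (⟪x i, y j⟫ : 𝕜)).submatrix σ id).submatrix id τ := rfl
  rw [gramDet, h, Matrix.det_permute', Matrix.det_permute, gramDet]
  push_cast
  ring

lemma gramDet_comp_perm_self {m : ℕ} (x y : Fin m → E) (σ : Equiv.Perm (Fin m)) :
    gramDet 𝕜 (x ∘ σ) (y ∘ σ) = gramDet 𝕜 x y := by
  rw [gramDet_comp_perm]
  have : ((Equiv.Perm.sign σ : ℤ) : 𝕜) * ((Equiv.Perm.sign σ : ℤ) : 𝕜) = 1 := by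
    rw [← Int.cast_mul, ← Units.val_mul, Int.units_mul_self, Units.val_one, Int.cast_one]
  rw [this, one_mul]

lemma norm_gramDet_comp_perm {m : ℕ} (x y : Fin m → E) (σ τ : Equiv.Perm (Fin m)) :
    ‖gramDet 𝕜 (x ∘ σ) (y ∘ τ)‖ = ‖gramDet 𝕜 x y‖ := by
  rw [gramDet_comp_perm, norm_mul, norm_mul]
  rcases Int.units_eq_one_or (Equiv.Perm.sign σ) with h | h <;>
    rcases Int.units_eq_one_or (Equiv.Perm.sign τ) with h' | h' <;>
      simp [h, h']

lemma gramDet_eq_zero_left {m : ℕ} {x : Fin m → E} (y : Fin m → E)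
    (h : ¬ LinearIndependent 𝕜 x) : gramDet 𝕜 x y = 0 := by
  classical
  obtain ⟨g, hg, i0, hi0⟩ := Fintype.not_linearIndependent_iff.mp h
  rw [gramDet, ← Matrix.exists_vecMul_eq_zero_iff]
  refine ⟨fun i => starRingEnd 𝕜 (g i), ?_, ?_⟩
  · intro hzero
    apply hi0
    have := congrFun hzero i0
    simpa using this
  · funext j
    simp only [Matrix.vecMul, dotProduct, Matrix.of_apply]
    have : ∑ i, starRingEnd 𝕜 (g i) * ⟪x i, y j⟫ = ⟪∑ i, g i • x i, y j⟫ := by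
      rw [sum_inner]
      congr 1
      ext i
      rw [inner_smul_left]
    rw [this, hg, inner_zero_left]
    simp

lemma gramDet_eq_zero_right {m : ℕ} (x : Fin m → E) {y : Fin m → E}
    (h : ¬ LinearIndependent 𝕜 y) : gramDet 𝕜 x y = 0 := by
  rw [← gramDet_conj, gramDet_eq_zero_left x h, map_zero]

end Helpers
section Helpers2

variable {𝕜 : Type*} [RCLike 𝕜] {E : Type*} [NormedAddCommGroup E] [InnerProductSpace 𝕜 E]

local notation "⟪" x ", " y "⟫" => @inner 𝕜 _ _ x y

lemma gram_update_left {m : ℕ} (x y : Fin m → E) (i0 : Fin m) (w : E) :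
    (Matrix.of fun i j => (⟪Function.update x i0 w i, y j⟫ : 𝕜))
      = (Matrix.of fun i j => (⟪x i, y j⟫ : 𝕜)).updateRow i0 (fun j => ⟪w, y j⟫) := by
  ext i j
  rcases eq_or_ne i i0 with rfl | h
  · simp [Matrix.updateRow_self]
  · simp [Matrix.updateRow_ne h, Function.update_of_ne h]

lemma gramDet_update_left {m : ℕ} (x y : Fin m → E) (i0 : Fin m) (a p : E)
    (hp : p ∈ Submodule.span 𝕜 {v | ∃ i, i ≠ i0 ∧ v = x i}) :
    gramDet 𝕜 (Function.update x i0 (a + p)) y = gramDet 𝕜 (Function.update x i0 a) y := by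
  classical
  have hrow : (fun j => (⟪a + p, y j⟫ : 𝕜)) = (fun j => (⟪a, y j⟫ : 𝕜)) + fun j => ⟪p, y j⟫ := by
    funext j; simp [inner_add_left]
  rw [gramDet, gram_update_left, hrow, Matrix.det_updateRow_add, ← gram_update_left,
    ← gram_update_left, ← gramDet, ← gramDet]
  have h0 : gramDet 𝕜 (Function.update x i0 p) y = 0 := by
    apply gramDet_eq_zero_left
    intro hli
    have hns := hli.notMem_span_image (s := {i0}ᶜ) (x := i0) (by simp)
    apply hns
    have hset : (Function.update x i0 p) '' {i0}ᶜ = {v | ∃ i, i ≠ i0 ∧ v = x i} := by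
      ext u
      constructor
      · rintro ⟨i, hi, rfl⟩
        have hi' : i ≠ i0 := by simpa using hi
        exact ⟨i, hi', (Function.update_of_ne hi' p x)⟩
      · rintro ⟨i, hi, rfl⟩
        exact ⟨i, by simpa using hi, Function.update_of_ne hi p x⟩
    rw [hset]
    have : Function.update x i0 p i0 = p := by simp
    rw [this]
    exact hp
  rw [h0, add_zero]

lemma gramDet_update_right {m : ℕ} (x y : Fin m → E) (i0 : Fin m) (a p : E)
    (hp : p ∈ Submodule.span 𝕜 {v | ∃ i, i ≠ i0 ∧ v = y i}) :
    gramDet 𝕜 x (Function.update y i0 (a + p)) = gramDet 𝕜 x (Function.update y i0 a) := by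
  rw [← gramDet_conj, gramDet_update_left y x i0 a p hp, gramDet_conj]

lemma gramDet_append_block {p q : ℕ} (x x' : Fin p → E) (z w : Fin q → E)
    (hxw : ∀ i j, (⟪x i, w j⟫ : 𝕜) = 0) (hzx : ∀ i j, (⟪z i, x' j⟫ : 𝕜) = 0) :
    gramDet 𝕜 (Fin.append x z) (Fin.append x' w) = gramDet 𝕜 x x' * gramDet 𝕜 z w := by
  classical
  rw [gramDet, ← Matrix.det_submatrix_equiv_self finSumFinEquiv]
  have hM : (Matrix.of fun i j => (⟪Fin.append x z i, Fin.append x' w j⟫ : 𝕜)).submatrix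
        finSumFinEquiv finSumFinEquiv
      = Matrix.fromBlocks (Matrix.of fun i j => (⟪x i, x' j⟫ : 𝕜)) 0 0
          (Matrix.of fun i j => (⟪z i, w j⟫ : 𝕜)) := by
    ext i j
    rcases i with i | i <;> rcases j with j | j <;>
      simp [Matrix.submatrix, finSumFinEquiv_apply_left, finSumFinEquiv_apply_right,
        Fin.append_left, Fin.append_right, hxw, hzx]
  rw [hM, Matrix.det_fromBlocks_zero₂₁, ← gramDet, ← gramDet]

end Helpers2

section Helpers3

variable {𝕜 : Type*} [RCLike 𝕜] {E : Type*} [NormedAddCommGroup E] [InnerProductSpace 𝕜 E]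
  [FiniteDimensional 𝕜 E]

local notation "⟪" x ", " y "⟫" => @inner 𝕜 _ _ x y

lemma update_snoc_last {α : Type*} {m : ℕ} (x : Fin m → α) (c w : α) :
    Function.update (Fin.snoc x c : Fin (m+1) → α) (Fin.last m) w = Fin.snoc x w := by
  funext j
  refine Fin.lastCases ?_ (fun i => ?_) j
  · simp
  · rw [Function.update_of_ne (Fin.castSucc_lt_last i).ne, Fin.snoc_castSucc, Fin.snoc_castSucc]

lemma snoc_eq_append {α : Type*} {m : ℕ} (x : Fin m → α) (c : α) :
    Fin.snoc x c = Fin.append x ![c] := by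
  rw [Fin.append_right_eq_snoc]
  simp

lemma gramDet_fin_one (a b : E) : gramDet 𝕜 ![a] ![b] = ⟪a, b⟫ := by
  rw [gramDet, Matrix.det_fin_one]
  simp

lemma gramDet_snoc_cross {m : ℕ} (x : Fin m → E) (v w : E) :
    gramDet 𝕜 (Fin.snoc x v) (Fin.snoc x w) =
      gramDet 𝕜 x x *
        ⟪v - (Submodule.orthogonalProjection (Submodule.span 𝕜 (Set.range x)) v : E),
          w - (Submodule.orthogonalProjection (Submodule.span 𝕜 (Set.range x)) w : E)⟫ := by
  classical
  set W := Submodule.span 𝕜 (Set.range x) with hW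
  set c := v - (Submodule.orthogonalProjection W v : E) with hc
  set d := w - (Submodule.orthogonalProjection W w : E) with hd
  have hcW : c ∈ Wᗮ := Submodule.sub_starProjection_mem_orthogonal v
  have hdW : d ∈ Wᗮ := Submodule.sub_starProjection_mem_orthogonal w
  have hxc : ∀ i, (⟪x i, c⟫ : 𝕜) = 0 := fun i =>
    (Submodule.mem_orthogonal W c).mp hcW (x i) (Submodule.subset_span (Set.mem_range_self i))
  have hxd : ∀ i, (⟪x i, d⟫ : 𝕜) = 0 := fun i =>
    (Submodule.mem_orthogonal W d).mp hdW (x i) (Submodule.subset_span (Set.mem_range_self i))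
  have hsubc : Set.range x ⊆ {u | ∃ i, i ≠ Fin.last m ∧ u = (Fin.snoc x c : Fin (m+1) → E) i} := by
    rintro u ⟨i, rfl⟩
    exact ⟨Fin.castSucc i, (Fin.castSucc_lt_last i).ne, by simp⟩
  have hmemv : (Submodule.orthogonalProjection W v : E)
      ∈ Submodule.span 𝕜 {u | ∃ i, i ≠ Fin.last m ∧ u = (Fin.snoc x c : Fin (m+1) → E) i} :=
    Submodule.span_mono hsubc (Submodule.orthogonalProjection W v).2
  have hsubd : Set.range x ⊆ {u | ∃ i, i ≠ Fin.last m ∧ u = (Fin.snoc x d : Fin (m+1) → E) i} := by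
    rintro u ⟨i, rfl⟩
    exact ⟨Fin.castSucc i, (Fin.castSucc_lt_last i).ne, by simp⟩
  have hmemw : (Submodule.orthogonalProjection W w : E)
      ∈ Submodule.span 𝕜 {u | ∃ i, i ≠ Fin.last m ∧ u = (Fin.snoc x d : Fin (m+1) → E) i} :=
    Submodule.span_mono hsubd (Submodule.orthogonalProjection W w).2
  have hupdv : (Fin.snoc x v : Fin (m+1) → E)
      = Function.update (Fin.snoc x c : Fin (m+1) → E) (Fin.last m)
          (c + (Submodule.orthogonalProjection W v : E)) := by
    rw [update_snoc_last, hc, sub_add_cancel]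
  have hupdw : (Fin.snoc x w : Fin (m+1) → E)
      = Function.update (Fin.snoc x d : Fin (m+1) → E) (Fin.last m)
          (d + (Submodule.orthogonalProjection W w : E)) := by
    rw [update_snoc_last, hd, sub_add_cancel]
  rw [hupdv, hupdw, gramDet_update_right _ _ _ d _ hmemw, gramDet_update_left _ _ _ c _ hmemv,
    update_snoc_last, update_snoc_last, snoc_eq_append x c, snoc_eq_append x d,
    gramDet_append_block x x ![c] ![d] (by intro i j; fin_cases j <;> simpa using hxd i)
      (by intro i j; fin_cases i <;> simpa [inner_eq_zero_symm] using hxc j),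
    gramDet_fin_one]

lemma gramDet_snoc_self_s12 {m : ℕ} (x : Fin m → E) (v : E) :
    gramDet 𝕜 (Fin.snoc x v) (Fin.snoc x v) =
      gramDet 𝕜 x x *
        ((‖v - (Submodule.orthogonalProjection (Submodule.span 𝕜 (Set.range x)) v : E)‖ ^ 2 : ℝ) : 𝕜) := by
  rw [gramDet_snoc_cross, inner_self_eq_norm_sq_to_K]
  push_cast
  ring

end Helpers3
section Helpers4

variable {𝕜 : Type*} [RCLike 𝕜] {E : Type*} [NormedAddCommGroup E] [InnerProductSpace 𝕜 E]
  [FiniteDimensional 𝕜 E]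

local notation "⟪" x ", " y "⟫" => @inner 𝕜 _ _ x y

noncomputable def dE (𝕜 : Type*) [RCLike 𝕜] {E : Type*} [NormedAddCommGroup E]
    [InnerProductSpace 𝕜 E] [FiniteDimensional 𝕜 E] {m : ℕ} (x : Fin m → E) (j : Fin m) : ℝ :=
  ‖x j - (Submodule.orthogonalProjection (earlierSpan (𝕜 := 𝕜) x j) (x j) : E)‖

lemma dE_nonneg {m : ℕ} (x : Fin m → E) (j : Fin m) : 0 ≤ dE 𝕜 x j := norm_nonneg _

lemma earlierSpan_castSucc {m : ℕ} (x : Fin (m+1) → E) (j : Fin m) :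
    earlierSpan (𝕜 := 𝕜) x (Fin.castSucc j) = earlierSpan (Fin.init x) j := by
  unfold earlierSpan
  congr 1
  ext u
  constructor
  · rintro ⟨i, hij, rfl⟩
    have hi : (i : ℕ) < m := by
      rw [Fin.lt_def] at hij
      simp only [Fin.coe_castSucc] at hij
      omega
    refine ⟨⟨i, hi⟩, ?_, rfl⟩
    rw [Fin.lt_def] at hij ⊢
    simpa using hij
  · rintro ⟨i, hij, rfl⟩
    refine ⟨Fin.castSucc i, ?_, rfl⟩
    rw [Fin.lt_def] at hij ⊢
    simpa using hij

lemma earlierSpan_last {m : ℕ} (x : Fin (m+1) → E) :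
    earlierSpan (𝕜 := 𝕜) x (Fin.last m) = Submodule.span 𝕜 (Set.range (Fin.init x)) := by
  unfold earlierSpan
  congr 1
  ext u
  constructor
  · rintro ⟨i, hij, rfl⟩
    have hi : (i : ℕ) < m := by
      rw [Fin.lt_def] at hij
      simpa using hij
    exact ⟨⟨i, hi⟩, rfl⟩
  · rintro ⟨i, rfl⟩
    exact ⟨Fin.castSucc i, Fin.castSucc_lt_last i, rfl⟩

lemma earlierSpan_eq_bot {m : ℕ} (x : Fin m → E) (j : Fin m) (hj : (j : ℕ) = 0) :
    earlierSpan (𝕜 := 𝕜) x j = ⊥ := by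
  unfold earlierSpan
  convert Submodule.span_empty
  ext u
  simp only [Set.mem_setOf_eq, Set.mem_empty_iff_false, iff_false]
  rintro ⟨i, hij, -⟩
  rw [Fin.lt_def, hj] at hij
  omega

lemma proj_congr {W W' : Submodule 𝕜 E} (h : W = W') (v : E) :
    (Submodule.orthogonalProjection W v : E) = Submodule.orthogonalProjection W' v := by subst h; rfl

lemma gramDet_self_eq_prod : ∀ {m : ℕ} (x : Fin m → E),
    gramDet 𝕜 x x = ((∏ j, dE 𝕜 x j ^ 2 : ℝ) : 𝕜) := by
  intro m
  induction m with
  | zero =>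
    intro x
    simp [gramDet, Matrix.det_fin_zero]
  | succ m ih =>
    intro x
    have h1 : ∀ j : Fin m, dE 𝕜 x (Fin.castSucc j) = dE 𝕜 (Fin.init x) j := by
      intro j
      unfold dE
      rw [proj_congr (earlierSpan_castSucc x j)]
      rfl
    have h2 : dE 𝕜 x (Fin.last m)
        = ‖x (Fin.last m) - (Submodule.orthogonalProjection (Submodule.span 𝕜 (Set.range (Fin.init x)))
            (x (Fin.last m)) : E)‖ := by
      unfold dE
      rw [proj_congr (earlierSpan_last x)]
    conv_lhs => rw [← Fin.snoc_init_self x]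
    rw [gramDet_snoc_self_s12, ih]
    have h3 : (∏ j, dE 𝕜 x j ^ 2)
        = (∏ j : Fin m, dE 𝕜 (Fin.init x) j ^ 2) * dE 𝕜 x (Fin.last m) ^ 2 := by
      rw [Fin.prod_univ_castSucc (f := fun j => dE 𝕜 x j ^ 2)]
      congr 1
      exact Finset.prod_congr rfl fun j _ => by rw [h1 j]
    rw [h3, h2]
    push_cast
    ring

lemma wedgeNorm_eq_prod {m : ℕ} (x : Fin m → E) : wedgeNorm 𝕜 x = ∏ j, dE 𝕜 x j := by
  rw [wedgeNorm, gramDet_self_eq_prod, RCLike.ofReal_re, Finset.prod_pow]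
  exact Real.sqrt_sq (Finset.prod_nonneg fun j _ => dE_nonneg x j)

lemma pythagoras (W : Submodule 𝕜 E) (v : E) :
    ‖v‖ ^ 2 = ‖(Submodule.orthogonalProjection W v : E)‖ ^ 2 + ‖v - (Submodule.orthogonalProjection W v : E)‖ ^ 2 := by
  have hc : v - (Submodule.orthogonalProjection W v : E) ∈ Wᗮ := Submodule.sub_starProjection_mem_orthogonal v
  have h : ⟪(Submodule.orthogonalProjection W v : E), v - (Submodule.orthogonalProjection W v : E)⟫ = 0 :=
    (Submodule.mem_orthogonal W _).mp hc _ (Submodule.orthogonalProjection W v).2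
  have h2 := norm_add_sq_eq_norm_sq_add_norm_sq_of_inner_eq_zero _ _ h
  simp only [add_sub_cancel] at h2
  rw [pow_two, pow_two, pow_two]
  simpa using h2

lemma dE_le_norm {m : ℕ} (x : Fin m → E) (j : Fin m) : dE 𝕜 x j ≤ ‖x j‖ := by
  have h := pythagoras (𝕜 := 𝕜) (earlierSpan (𝕜 := 𝕜) x j) (x j)
  have h1 : 0 ≤ dE 𝕜 x j := dE_nonneg x j
  have h2 : (0:ℝ) ≤ ‖x j‖ := norm_nonneg _
  unfold dE at h1 ⊢
  nlinarith [norm_nonneg ((Submodule.orthogonalProjection (earlierSpan (𝕜 := 𝕜) x j) (x j) : E))]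

lemma dE_ge {m : ℕ} (x : Fin m → E) (j : Fin m) {t : ℝ} (ht : 0 ≤ t) (ht1 : t ≤ 1)
    (h : 1 - t ≤ pdistPV 𝕜 (x j) (earlierSpan x j)) :
    (1 - t) * ‖x j‖ ≤ dE 𝕜 x j := by
  classical
  set W := earlierSpan (𝕜 := 𝕜) x j with hWdef
  set v := x j with hv
  set P := (Submodule.orthogonalProjection W v : E) with hPdef
  have hdE : dE 𝕜 x j = ‖v - P‖ := rfl
  rcases eq_or_ne P 0 with h0 | h0
  · rw [hdE, h0, sub_zero]
    exact mul_le_of_le_one_left (norm_nonneg v) (by linarith)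
  · have hv0 : v ≠ 0 := by
      rintro h'
      apply h0
      rw [hPdef, h', map_zero, Submodule.coe_zero]
    have hvpos : (0:ℝ) < ‖v‖ := norm_pos_iff.mpr hv0
    have hPpos : (0:ℝ) < ‖P‖ := norm_pos_iff.mpr h0
    -- compute pdist v P
    have hPv : (⟪v, P⟫ : 𝕜) = ((‖P‖^2 : ℝ) : 𝕜) := by
      have hPc : (⟪P, v - P⟫ : 𝕜) = 0 :=
        (Submodule.mem_orthogonal W _).mp (Submodule.sub_starProjection_mem_orthogonal v) _
          (Submodule.orthogonalProjection W v).2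
      have hcP : (⟪v - P, P⟫ : 𝕜) = 0 := inner_eq_zero_symm.mp hPc
      have : (⟪v, P⟫ : 𝕜) = ⟪v - P, P⟫ + ⟪P, P⟫ := by
        rw [← inner_add_left]
        congr 1
        abel
      rw [this, hcP, zero_add, inner_self_eq_norm_sq_to_K]
      push_cast
      ring
    have hvP : (⟪P, v⟫ : 𝕜) = ((‖P‖^2 : ℝ) : 𝕜) := by
      rw [← inner_conj_symm, hPv, RCLike.conj_ofReal]
    have hgram : gramDet 𝕜 ![v, P] ![v, P]
        = (((‖P‖^2 * ‖v - P‖^2 : ℝ)) : 𝕜) := by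
      rw [gramDet, Matrix.det_fin_two]
      simp only [Matrix.of_apply, Matrix.cons_val', Matrix.cons_val_zero, Matrix.cons_val_one,
        Matrix.head_cons, Matrix.empty_val', Matrix.cons_val_fin_one]
      rw [hPv, hvP, inner_self_eq_norm_sq_to_K, inner_self_eq_norm_sq_to_K]
      have hpy := pythagoras (𝕜 := 𝕜) W v
      rw [← hPdef] at hpy
      rw [show (‖P‖^2 * ‖v - P‖^2 : ℝ) = ‖v‖^2 * ‖P‖^2 - ‖P‖^2 * ‖P‖^2 by nlinarith [hpy]]
      push_cast
      ring
    have hwn : wedgeNorm 𝕜 ![v, P] = ‖P‖ * ‖v - P‖ := by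
      rw [wedgeNorm, hgram, RCLike.ofReal_re]
      rw [show ‖P‖^2 * ‖v - P‖^2 = (‖P‖ * ‖v - P‖)^2 by ring]
      exact Real.sqrt_sq (by positivity)
    have hpd : pdist 𝕜 v P = ‖v - P‖ / ‖v‖ := by
      rw [pdist, hwn]
      field_simp
    have hmem : pdist 𝕜 v P ∈ {d : ℝ | ∃ y ∈ W, y ≠ 0 ∧ d = pdist 𝕜 v y} :=
      ⟨P, (Submodule.orthogonalProjection W v).2, h0, rfl⟩
    have hbdd : BddBelow {d : ℝ | ∃ y ∈ W, y ≠ 0 ∧ d = pdist 𝕜 v y} := by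
      refine ⟨0, ?_⟩
      rintro d ⟨yy, -, -, rfl⟩
      exact div_nonneg (Real.sqrt_nonneg _) (by positivity)
    have hle : pdistPV 𝕜 v W ≤ pdist 𝕜 v P := csInf_le hbdd hmem
    have : 1 - t ≤ ‖v - P‖ / ‖v‖ := by
      rw [← hpd]
      exact le_trans h hle
    rw [hdE]
    exact (le_div_iff₀ hvpos).mp this

end Helpers4
section Helpers5

variable {𝕜 : Type*} [RCLike 𝕜] {E : Type*} [NormedAddCommGroup E] [InnerProductSpace 𝕜 E]
  [FiniteDimensional 𝕜 E]

lemma exp_bound {t : ℝ} (h0 : 0 ≤ t) (h2 : t ≤ 1/2) : Real.exp (-2 * t) ≤ 1 - t := by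
  have h1 : 1 + 2*t ≤ Real.exp (2*t) := by
    have := Real.add_one_le_exp (2*t)
    linarith
  have hpos : (0:ℝ) < 1 + 2*t := by linarith
  have h3 : Real.exp (-2*t) = 1 / Real.exp (2*t) := by
    rw [show (-2:ℝ)*t = -(2*t) by ring, Real.exp_neg]
    ring
  rw [h3]
  have h4 : 1 / Real.exp (2*t) ≤ 1 / (1+2*t) := one_div_le_one_div_of_le hpos h1
  have h5 : 1 / (1+2*t) ≤ 1 - t := by
    rw [div_le_iff₀ hpos]
    nlinarith
  linarith

lemma prod_c_ge {m : ℕ} :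
    Real.exp (-2) ≤ ∏ j : Fin m, (if (j:ℕ) = 0 then 1 else 1 - (1/2:ℝ)^(j:ℕ)) := by
  have hterm : ∀ j : Fin m, Real.exp (-2 * (if (j:ℕ) = 0 then 0 else (1/2:ℝ)^(j:ℕ)))
      ≤ (if (j:ℕ) = 0 then 1 else 1 - (1/2:ℝ)^(j:ℕ)) := by
    intro j
    by_cases h : (j:ℕ) = 0
    · simp [h]
    · simp only [h, if_false]
      apply exp_bound (by positivity)
      have hj : 1 ≤ (j:ℕ) := Nat.one_le_iff_ne_zero.mpr h
      calc (1/2:ℝ)^(j:ℕ) ≤ (1/2:ℝ)^1 := pow_le_pow_of_le_one (by norm_num) (by norm_num) hj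
        _ = 1/2 := pow_one _
  have hmain := Finset.prod_le_prod (s := (Finset.univ : Finset (Fin m)))
    (f := fun j : Fin m => Real.exp (-2 * (if (j:ℕ) = 0 then 0 else (1/2:ℝ)^(j:ℕ))))
    (g := fun j : Fin m => if (j:ℕ) = 0 then 1 else 1 - (1/2:ℝ)^(j:ℕ))
    (fun j _ => (Real.exp_pos _).le) (fun j _ => hterm j)
  refine le_trans ?_ hmain
  rw [← Real.exp_sum]
  apply Real.exp_le_exp.mpr
  have hs : (∑ j : Fin m, (if (j:ℕ) = 0 then (0:ℝ) else (1/2:ℝ)^(j:ℕ))) ≤ 1 := by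
    cases m with
    | zero => simp
    | succ m' =>
      rw [Fin.sum_univ_succ]
      have hsucc : ∀ j : Fin m',
          (if ((j.succ : Fin (m'+1)):ℕ) = 0 then (0:ℝ) else (1/2:ℝ)^((j.succ : Fin (m'+1)):ℕ))
            = (1/2:ℝ) * (1/2)^(j:ℕ) := by
        intro j
        rw [if_neg (by rw [Fin.val_succ]; omega), Fin.val_succ]
        ring
      rw [Finset.sum_congr rfl (fun j _ => hsucc j), ← Finset.mul_sum,
        Fin.sum_univ_eq_sum_range (fun j => (1/2:ℝ)^j)]
      have hgeo := sum_geometric_two_le m'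
      norm_num
      linarith
  have : (∑ j : Fin m, -2 * (if (j:ℕ) = 0 then (0:ℝ) else (1/2:ℝ)^(j:ℕ)))
      = -2 * (∑ j : Fin m, (if (j:ℕ) = 0 then (0:ℝ) else (1/2:ℝ)^(j:ℕ))) := by
    rw [Finset.mul_sum]
  rw [this]
  linarith

lemma wedgeNorm_nonneg {m : ℕ} (x : Fin m → E) : 0 ≤ wedgeNorm 𝕜 x := Real.sqrt_nonneg _

lemma wedgeNorm_le_prod {m : ℕ} (x : Fin m → E) : wedgeNorm 𝕜 x ≤ ∏ j, ‖x j‖ := by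
  rw [wedgeNorm_eq_prod]
  exact Finset.prod_le_prod (fun j _ => dE_nonneg x j) (fun j _ => dE_le_norm x j)

lemma wedgeNorm_ge_of_almostOrthogonal {m : ℕ} {x : Fin m → E} (h : AlmostOrthogonal 𝕜 x) :
    Real.exp (-2) * ∏ j, ‖x j‖ ≤ wedgeNorm 𝕜 x := by
  rw [wedgeNorm_eq_prod]
  have hterm : ∀ j : Fin m, (if (j:ℕ) = 0 then 1 else 1 - (1/2:ℝ)^(j:ℕ)) * ‖x j‖ ≤ dE 𝕜 x j := by
    intro j
    by_cases hj : (j:ℕ) = 0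
    · simp only [hj, if_pos rfl, one_mul]
      unfold dE
      rw [proj_congr (earlierSpan_eq_bot x j hj)]
      have hbot : (Submodule.orthogonalProjection (⊥ : Submodule 𝕜 E) (x j) : E) = 0 := by simp
      rw [hbot, sub_zero]
      simp
    · have ht : (0:ℝ) ≤ (1/2:ℝ)^(j:ℕ) := by positivity
      have ht1 : (1/2:ℝ)^(j:ℕ) ≤ 1 := pow_le_one₀ (by norm_num) (by norm_num)
      simp only [hj, if_false]
      exact dE_ge x j ht ht1 (h.2 j (Nat.pos_of_ne_zero hj))
  have hcnn : ∀ j : Fin m, (0:ℝ) ≤ (if (j:ℕ) = 0 then 1 else 1 - (1/2:ℝ)^(j:ℕ)) := by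
    intro j
    by_cases hj : (j:ℕ) = 0
    · simp [hj]
    · simp only [hj, if_false, sub_nonneg]
      exact pow_le_one₀ (by norm_num) (by norm_num)
  calc Real.exp (-2) * ∏ j, ‖x j‖
      ≤ (∏ j : Fin m, (if (j:ℕ) = 0 then 1 else 1 - (1/2:ℝ)^(j:ℕ))) * ∏ j, ‖x j‖ :=
        mul_le_mul_of_nonneg_right prod_c_ge
          (Finset.prod_nonneg fun j _ => norm_nonneg _)
    _ = ∏ j : Fin m, (if (j:ℕ) = 0 then 1 else 1 - (1/2:ℝ)^(j:ℕ)) * ‖x j‖ :=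
        (Finset.prod_mul_distrib).symm
    _ ≤ ∏ j, dE 𝕜 x j :=
        Finset.prod_le_prod (fun j _ => mul_nonneg (hcnn j) (norm_nonneg _))
          (fun j _ => hterm j)

end Helpers5
section Helpers6

variable {𝕜 : Type*} [RCLike 𝕜] {E : Type*} [NormedAddCommGroup E] [InnerProductSpace 𝕜 E]

lemma succAbove_val {r : ℕ} (q : Fin (r+1)) (i : Fin r) :
    ((q.succAbove i : Fin (r+1)) : ℕ) = if (i:ℕ) < (q:ℕ) then (i:ℕ) else (i:ℕ)+1 := by
  rcases lt_or_ge ((i:ℕ)) ((q:ℕ)) with h | h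
  · rw [Fin.succAbove_of_castSucc_lt _ _ (by rw [Fin.lt_def]; simpa using h), if_pos h]
    simp
  · rw [Fin.succAbove_of_le_castSucc _ _ (by rw [Fin.le_def]; simpa using h), if_neg (by omega)]
    simp

/-- The permutation of `Fin (r+1)` sending `last` to `q` and `castSucc i` to `q.succAbove i`. -/
def insEquiv {r : ℕ} (q : Fin (r+1)) : Equiv.Perm (Fin (r+1)) :=
  (finSuccEquiv' (Fin.last r)).trans (finSuccEquiv' q).symm

lemma insEquiv_castSucc {r : ℕ} (q : Fin (r+1)) (i : Fin r) :
    insEquiv q (Fin.castSucc i) = q.succAbove i := by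
  rw [insEquiv, Equiv.trans_apply, ← Fin.succAbove_last_apply, finSuccEquiv'_succAbove,
    finSuccEquiv'_symm_some]

lemma insEquiv_last {r : ℕ} (q : Fin (r+1)) : insEquiv q (Fin.last r) = q := by
  rw [insEquiv, Equiv.trans_apply, finSuccEquiv'_at, finSuccEquiv'_symm_none]

lemma comp_insEquiv {α : Type*} {r : ℕ} (f : Fin (r+1) → α) (q : Fin (r+1)) :
    f ∘ (insEquiv q) = Fin.snoc (f ∘ q.succAbove) (f q) := by
  funext j
  refine Fin.lastCases ?_ (fun i => ?_) j
  · rw [Function.comp_apply, insEquiv_last]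
    simp
  · rw [Function.comp_apply, insEquiv_castSucc]
    simp

/-- Extension of a permutation of `Fin r` to `Fin (r+1)` fixing `last`. -/
def extEquiv {r : ℕ} (σ : Equiv.Perm (Fin r)) : Equiv.Perm (Fin (r+1)) :=
  (finSuccEquiv' (Fin.last r)).trans ((Equiv.optionCongr σ).trans (finSuccEquiv' (Fin.last r)).symm)

lemma extEquiv_castSucc {r : ℕ} (σ : Equiv.Perm (Fin r)) (i : Fin r) :
    extEquiv σ (Fin.castSucc i) = Fin.castSucc (σ i) := by
  rw [extEquiv, Equiv.trans_apply, Equiv.trans_apply, ← Fin.succAbove_last_apply,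
    finSuccEquiv'_succAbove]
  simp only [Equiv.optionCongr_apply, Option.map_some]
  rw [finSuccEquiv'_symm_some, Fin.succAbove_last_apply]

lemma extEquiv_last {r : ℕ} (σ : Equiv.Perm (Fin r)) :
    extEquiv σ (Fin.last r) = Fin.last r := by
  rw [extEquiv, Equiv.trans_apply, Equiv.trans_apply, finSuccEquiv'_at]
  simp only [Equiv.optionCongr_apply, Option.map_none]
  rw [finSuccEquiv'_symm_none]

lemma snoc_comp_extEquiv {α : Type*} {r : ℕ} (g : Fin r → α) (a : α) (σ : Equiv.Perm (Fin r)) :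
    (Fin.snoc g a : Fin (r+1) → α) ∘ (extEquiv σ) = Fin.snoc (g ∘ σ) a := by
  funext j
  refine Fin.lastCases ?_ (fun i => ?_) j
  · rw [Function.comp_apply, extEquiv_last]
    simp
  · rw [Function.comp_apply, extEquiv_castSucc]
    simp

lemma update_snoc_castSucc {α : Type*} {r : ℕ} (g : Fin r → α) (c w : α) (i : Fin r) :
    Function.update (Fin.snoc g c : Fin (r+1) → α) (Fin.castSucc i) w
      = Fin.snoc (Function.update g i w) c := by
  funext j
  refine Fin.lastCases ?_ (fun i' => ?_) j
  · rw [Function.update_of_ne (Fin.castSucc_lt_last i).ne']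
    simp
  · rcases eq_or_ne i' i with rfl | h
    · simp
    · rw [Function.update_of_ne (by simpa using fun hc => h (Fin.castSucc_injective _ hc)),
        Fin.snoc_castSucc, Fin.snoc_castSucc, Function.update_of_ne h]

lemma snoc_snoc_eq_append {α : Type*} {r : ℕ} (x : Fin r → α) (a b : α) :
    (Fin.snoc (Fin.snoc x a : Fin (r+1) → α) b : Fin (r+2) → α) = Fin.append x ![a, b] := by
  have h1 : ![a, b] = Fin.snoc ![a] b := by
    funext j
    fin_cases j <;> simp [Fin.snoc]
  rw [h1, Fin.append_snoc, Fin.append_right_eq_snoc]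
  simp

end Helpers6
set_option maxHeartbeats 1600000 in
/-- let `1 ≤ k < ℓ ≤ m ≤ n` and let `y₁,…,yₘ` be linearly
independent in `Lⁿ` (`L = ℝ` or `ℂ`; here the tuple has length `m+1` with
`0`-based indices `k < l`).  If both sequences obtained by omitting `y_ℓ`
resp. `y_k` are almost orthogonal, then the subspaces they span satisfy
`dist(V₁,V₂) ≤ e⁴·‖y₁ ∧ ⋯ ∧ yₘ‖/(‖y₁‖⋯‖yₘ‖)`, where `dist(V₁,V₂)` is
computed via these two bases. -/
theorem stmt12 {𝕜 : Type*} [RCLike 𝕜] {n m : ℕ} (hmn : m + 1 ≤ n)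
    (y : Fin (m + 1) → EuclideanSpace 𝕜 (Fin n))
    (k l : Fin (m + 1)) (hkl : k < l)
    (hy : LinearIndependent 𝕜 y)
    (h₁ : AlmostOrthogonal 𝕜 (y ∘ l.succAbove))
    (h₂ : AlmostOrthogonal 𝕜 (y ∘ k.succAbove)) :
    pdistT 𝕜 (y ∘ l.succAbove) (y ∘ k.succAbove) ≤
      Real.exp 4 * wedgeNorm 𝕜 y / ∏ i, ‖y i‖ := by
  classical
  cases m with
  | zero =>
    rw [Fin.lt_def] at hkl
    have hk := k.isLt
    have hl := l.isLt
    omega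
  | succ p =>
  have hkv : (k:ℕ) < (l:ℕ) := by rwa [Fin.lt_def] at hkl
  have hlv : (l:ℕ) < p+2 := l.isLt
  set k' : Fin (p+1) := ⟨(k:ℕ), by omega⟩ with hk'def
  set l' : Fin (p+1) := ⟨(l:ℕ)-1, by omega⟩ with hl'def
  have hk'v : (k':ℕ) = (k:ℕ) := rfl
  have hl'v : (l':ℕ) = (l:ℕ) - 1 := rfl
  set X₁ := y ∘ l.succAbove with hX₁def
  set X₂ := y ∘ k.succAbove with hX₂def
  set ω : Fin p → EuclideanSpace 𝕜 (Fin n) := fun i => y (l.succAbove (k'.succAbove i)) with hωdef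
  have hf1 : l.succAbove k' = k := by
    ext
    rw [succAbove_val, hk'v, if_pos hkv]
  have hf2 : k.succAbove l' = l := by
    ext
    rw [succAbove_val, hl'v, if_neg (by omega)]
    omega
  have hf3 : ∀ i : Fin p, k.succAbove (l'.succAbove i) = l.succAbove (k'.succAbove i) := by
    intro i
    have hi := i.isLt
    ext
    rw [succAbove_val, succAbove_val, succAbove_val, succAbove_val, hk'v, hl'v]
    split_ifs <;> omega
  -- permutation normal forms
  have hX1σ : X₁ ∘ (insEquiv k') = Fin.snoc ω (y k) := by
    rw [comp_insEquiv]
    have h1 : X₁ ∘ k'.succAbove = ω := rfl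
    have h2 : X₁ k' = y k := by
      show y (l.succAbove k') = y k
      rw [hf1]
    rw [h1, h2]
  have hX2σ : X₂ ∘ (insEquiv l') = Fin.snoc ω (y l) := by
    rw [comp_insEquiv]
    have h1 : X₂ ∘ l'.succAbove = ω := by
      funext i
      show y (k.succAbove (l'.succAbove i)) = ω i
      rw [hf3 i]
    have h2 : X₂ l' = y l := by
      show y (k.succAbove l') = y l
      rw [hf2]
    rw [h1, h2]
  have hYσ : y ∘ ((extEquiv (insEquiv k')).trans (insEquiv l))
      = Fin.snoc (Fin.snoc ω (y k)) (y l) := by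
    have h1 : y ∘ ⇑((extEquiv (insEquiv k')).trans (insEquiv l))
        = (y ∘ ⇑(insEquiv l)) ∘ ⇑(extEquiv (insEquiv k')) := rfl
    rw [h1, comp_insEquiv, ← hX₁def, snoc_comp_extEquiv, hX1σ]
  -- projections
  set W := Submodule.span 𝕜 (Set.range ω) with hWdef
  set a := y k - (Submodule.orthogonalProjection W (y k) : EuclideanSpace 𝕜 (Fin n)) with ha
  set b := y l - (Submodule.orthogonalProjection W (y l) : EuclideanSpace 𝕜 (Fin n)) with hb
  have haW : a ∈ Wᗮ := by
    rw [ha]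
    exact Submodule.sub_starProjection_mem_orthogonal (y k)
  have hbW : b ∈ Wᗮ := by
    rw [hb]
    exact Submodule.sub_starProjection_mem_orthogonal (y l)
  have horth1 : ∀ (i : Fin p) (j : Fin 2), (inner 𝕜 (ω i) (![a,b] j) : 𝕜) = 0 := by
    intro i j
    fin_cases j
    · exact (Submodule.mem_orthogonal W a).mp haW _ (Submodule.subset_span ⟨i, rfl⟩)
    · exact (Submodule.mem_orthogonal W b).mp hbW _ (Submodule.subset_span ⟨i, rfl⟩)
  have horth2 : ∀ (i : Fin 2) (j : Fin p), (inner 𝕜 (![a,b] i) (ω j) : 𝕜) = 0 := by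
    intro i j
    fin_cases i
    · simpa using inner_eq_zero_symm.mp (horth1 j 0)
    · simpa using inner_eq_zero_symm.mp (horth1 j 1)
  -- Gram determinant computations
  set g := ∏ j, dE 𝕜 ω j ^ 2 with hgdef
  have hg0 : (0:ℝ) ≤ g := Finset.prod_nonneg (fun j _ => sq_nonneg _)
  have hGω : gramDet 𝕜 ω ω = ((g:ℝ):𝕜) := gramDet_self_eq_prod ω
  have hG1 : gramDet 𝕜 X₁ X₁ = ((g * ‖a‖^2 : ℝ) : 𝕜) := by
    rw [← gramDet_comp_perm_self X₁ X₁ (insEquiv k'), hX1σ, gramDet_snoc_self_s12, ← hWdef,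
      ← ha, hGω]
    push_cast
    ring
  have hG2 : gramDet 𝕜 X₂ X₂ = ((g * ‖b‖^2 : ℝ) : 𝕜) := by
    rw [← gramDet_comp_perm_self X₂ X₂ (insEquiv l'), hX2σ, gramDet_snoc_self_s12, ← hWdef,
      ← hb, hGω]
    push_cast
    ring
  have hG12 : ‖gramDet 𝕜 X₁ X₂‖ = g * ‖(inner 𝕜 a b : 𝕜)‖ := by
    rw [← norm_gramDet_comp_perm X₁ X₂ (insEquiv k') (insEquiv l'), hX1σ, hX2σ,
      gramDet_snoc_cross, ← hWdef, ← ha, ← hb, hGω, norm_mul, RCLike.norm_ofReal,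
      abs_of_nonneg hg0]
  have h2x2 : gramDet 𝕜 ![a,b] ![a,b]
      = ((‖a‖^2 * ‖b‖^2 - ‖(inner 𝕜 a b : 𝕜)‖^2 : ℝ) : 𝕜) := by
    rw [gramDet, Matrix.det_fin_two]
    simp only [Matrix.of_apply, Matrix.cons_val', Matrix.cons_val_zero, Matrix.cons_val_one,
      Matrix.head_cons, Matrix.empty_val', Matrix.cons_val_fin_one]
    rw [inner_self_eq_norm_sq_to_K, inner_self_eq_norm_sq_to_K, ← inner_conj_symm a b,
      RCLike.conj_mul]
    simp only [RCLike.norm_conj]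
    push_cast
    ring
  have hGY : gramDet 𝕜 y y
      = ((g * (‖a‖^2 * ‖b‖^2 - ‖(inner 𝕜 a b : 𝕜)‖^2) : ℝ) : 𝕜) := by
    rw [← gramDet_comp_perm_self y y ((extEquiv (insEquiv k')).trans (insEquiv l)), hYσ]
    have hstep1 : (Fin.snoc (Fin.snoc ω (y k)) (y l) : Fin (p+2) → EuclideanSpace 𝕜 (Fin n))
        = Function.update (Fin.snoc (Fin.snoc ω (y k)) b : Fin (p+2) → EuclideanSpace 𝕜 (Fin n))
            (Fin.last (p+1)) (b + (Submodule.orthogonalProjection W (y l) : EuclideanSpace 𝕜 (Fin n))) := by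
      rw [update_snoc_last, hb, sub_add_cancel]
    have hmem1 : (Submodule.orthogonalProjection W (y l) : EuclideanSpace 𝕜 (Fin n)) ∈ Submodule.span 𝕜
        {u | ∃ i, i ≠ Fin.last (p+1)
          ∧ u = (Fin.snoc (Fin.snoc ω (y k)) b : Fin (p+2) → EuclideanSpace 𝕜 (Fin n)) i} := by
      refine Submodule.span_mono ?_ (Submodule.orthogonalProjection W (y l)).2
      rintro u ⟨i, rfl⟩
      exact ⟨Fin.castSucc (Fin.castSucc i), (Fin.castSucc_lt_last _).ne, by simp⟩
    rw [hstep1, gramDet_update_left _ _ _ b _ hmem1, gramDet_update_right _ _ _ b _ hmem1,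
      update_snoc_last]
    have hstep2 : (Fin.snoc (Fin.snoc ω (y k)) b : Fin (p+2) → EuclideanSpace 𝕜 (Fin n))
        = Function.update (Fin.snoc (Fin.snoc ω a) b : Fin (p+2) → EuclideanSpace 𝕜 (Fin n))
            (Fin.castSucc (Fin.last p))
            (a + (Submodule.orthogonalProjection W (y k) : EuclideanSpace 𝕜 (Fin n))) := by
      rw [update_snoc_castSucc, update_snoc_last, ha, sub_add_cancel]
    have hmem2 : (Submodule.orthogonalProjection W (y k) : EuclideanSpace 𝕜 (Fin n)) ∈ Submodule.span 𝕜
        {u | ∃ i, i ≠ Fin.castSucc (Fin.last p)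
          ∧ u = (Fin.snoc (Fin.snoc ω a) b : Fin (p+2) → EuclideanSpace 𝕜 (Fin n)) i} := by
      refine Submodule.span_mono ?_ (Submodule.orthogonalProjection W (y k)).2
      rintro u ⟨i, rfl⟩
      refine ⟨Fin.castSucc (Fin.castSucc i), ?_, by simp⟩
      intro hc
      exact absurd (Fin.castSucc_injective _ hc) (Fin.castSucc_lt_last i).ne
    rw [hstep2, gramDet_update_left _ _ _ a _ hmem2, gramDet_update_right _ _ _ a _ hmem2,
      update_snoc_castSucc, update_snoc_last,
      snoc_snoc_eq_append, gramDet_append_block ω ω ![a,b] ![a,b] horth1 horth2, hGω, h2x2]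
    push_cast
    ring
  -- real parts and wedge norms
  have hreG1 : RCLike.re (gramDet 𝕜 X₁ X₁) = g * ‖a‖^2 := by rw [hG1, RCLike.ofReal_re]
  have hreG2 : RCLike.re (gramDet 𝕜 X₂ X₂) = g * ‖b‖^2 := by rw [hG2, RCLike.ofReal_re]
  have hwω : wedgeNorm 𝕜 ω = Real.sqrt g := by rw [wedgeNorm, hGω, RCLike.ofReal_re]
  have hwy : wedgeNorm 𝕜 y
      = Real.sqrt (g * (‖a‖^2 * ‖b‖^2 - ‖(inner 𝕜 a b : 𝕜)‖^2)) := by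
    rw [wedgeNorm, hGY, RCLike.ofReal_re]
  have hkey : pdistT 𝕜 X₁ X₂
      = wedgeNorm 𝕜 ω * wedgeNorm 𝕜 y / (wedgeNorm 𝕜 X₁ * wedgeNorm 𝕜 X₂) := by
    rw [pdistT, hreG1, hreG2, hG12, hwω, hwy]
    congr 1
    rw [show g * ‖a‖^2 * (g * ‖b‖^2) - (g * ‖(inner 𝕜 a b : 𝕜)‖)^2
        = g * (g * (‖a‖^2 * ‖b‖^2 - ‖(inner 𝕜 a b : 𝕜)‖^2)) by ring,
      Real.sqrt_mul hg0]
  -- norm products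
  have hy0 : ∀ i, (0:ℝ) < ‖y i‖ := fun i => norm_pos_iff.mpr (hy.ne_zero i)
  have hp1 : (∏ i, ‖y i‖) = ‖y l‖ * ∏ i, ‖X₁ i‖ := Fin.prod_univ_succAbove (fun i => ‖y i‖) l
  have hp2 : (∏ i, ‖y i‖) = ‖y k‖ * ∏ i, ‖X₂ i‖ := Fin.prod_univ_succAbove (fun i => ‖y i‖) k
  have hp3 : (∏ i, ‖X₁ i‖) = ‖y k‖ * ∏ i, ‖ω i‖ := by
    rw [Fin.prod_univ_succAbove (fun i => ‖X₁ i‖) k']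
    have e1 : ‖X₁ k'‖ = ‖y k‖ := by
      show ‖y (l.succAbove k')‖ = ‖y k‖
      rw [hf1]
    have e2 : (∏ i, ‖X₁ (k'.succAbove i)‖) = ∏ i, ‖ω i‖ := rfl
    rw [e1, e2]
  have hPone : (0:ℝ) < ∏ i, ‖X₁ i‖ :=
    Finset.prod_pos (fun i _ => by
      show (0:ℝ) < ‖y (l.succAbove i)‖
      exact hy0 _)
  have hPtwo : (0:ℝ) < ∏ i, ‖X₂ i‖ :=
    Finset.prod_pos (fun i _ => by
      show (0:ℝ) < ‖y (k.succAbove i)‖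
      exact hy0 _)
  have hPall : (0:ℝ) < ∏ i, ‖y i‖ := Finset.prod_pos (fun i _ => hy0 _)
  have hw1 : Real.exp (-2) * ∏ i, ‖X₁ i‖ ≤ wedgeNorm 𝕜 X₁ :=
    wedgeNorm_ge_of_almostOrthogonal h₁
  have hw2 : Real.exp (-2) * ∏ i, ‖X₂ i‖ ≤ wedgeNorm 𝕜 X₂ :=
    wedgeNorm_ge_of_almostOrthogonal h₂
  have hwub : wedgeNorm 𝕜 ω ≤ ∏ i, ‖ω i‖ := wedgeNorm_le_prod ω
  have hw1pos : (0:ℝ) < wedgeNorm 𝕜 X₁ :=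
    lt_of_lt_of_le (mul_pos (Real.exp_pos _) hPone) hw1
  have hw2pos : (0:ℝ) < wedgeNorm 𝕜 X₂ :=
    lt_of_lt_of_le (mul_pos (Real.exp_pos _) hPtwo) hw2
  have hwYnn : (0:ℝ) ≤ wedgeNorm 𝕜 y := wedgeNorm_nonneg y
  have hwωnn : (0:ℝ) ≤ wedgeNorm 𝕜 ω := wedgeNorm_nonneg ω
  rw [hkey, div_le_div_iff₀ (mul_pos hw1pos hw2pos) hPall]
  have hb1 : (∏ i, ‖X₁ i‖) ≤ Real.exp 2 * wedgeNorm 𝕜 X₁ := by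
    have hh := mul_le_mul_of_nonneg_left hw1 (Real.exp_pos 2).le
    rwa [← mul_assoc, ← Real.exp_add, (by norm_num : (2:ℝ) + -2 = 0), Real.exp_zero,
      one_mul] at hh
  have hb2 : (∏ i, ‖X₂ i‖) ≤ Real.exp 2 * wedgeNorm 𝕜 X₂ := by
    have hh := mul_le_mul_of_nonneg_left hw2 (Real.exp_pos 2).le
    rwa [← mul_assoc, ← Real.exp_add, (by norm_num : (2:ℝ) + -2 = 0), Real.exp_zero,
      one_mul] at hh
  have hkey2 : wedgeNorm 𝕜 ω * (∏ i, ‖y i‖)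
      ≤ Real.exp 4 * (wedgeNorm 𝕜 X₁ * wedgeNorm 𝕜 X₂) := by
    have e1 : (∏ i, ‖X₁ i‖) * (∏ i, ‖X₂ i‖) = (∏ i, ‖ω i‖) * ∏ i, ‖y i‖ := by
      rw [hp3, hp2]
      ring
    calc wedgeNorm 𝕜 ω * (∏ i, ‖y i‖)
        ≤ (∏ i, ‖ω i‖) * ∏ i, ‖y i‖ := mul_le_mul_of_nonneg_right hwub hPall.le
      _ = (∏ i, ‖X₁ i‖) * ∏ i, ‖X₂ i‖ := e1.symm
      _ ≤ (Real.exp 2 * wedgeNorm 𝕜 X₁) * (Real.exp 2 * wedgeNorm 𝕜 X₂) :=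
          mul_le_mul hb1 hb2 hPtwo.le (by positivity)
      _ = Real.exp 4 * (wedgeNorm 𝕜 X₁ * wedgeNorm 𝕜 X₂) := by
          rw [show (4:ℝ) = 2 + 2 by norm_num, Real.exp_add]
          ring
  have hfin := mul_le_mul_of_nonneg_right hkey2 hwYnn
  nlinarith [hfin]
end
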